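/- arXiv:1201.6462 — 2 statements merged into one kernel-verified Lean document; each statement's English description precedes it below -/
import Mathlib

section
/- For any two k-clusterings C, C' of V, the relative regret f(C') = cost(C') − cost(C) satisfies f(C') = (1/2) Σ_{i=1}^k Σ_{j=1}^k F_{i,j}(C') + Σ_{j=1}^k Σ_{1 ≤ i₁ < i₂ ≤ k} F_{i₁,i₂,j}(C'), where F_{i,j}(C') = Σ_{u ∈ C_{ij}} Σ_{v ∈ C_i \ C_{ij}} f_{u,v}(C') and F_{i₁,i₂,j}(C') = Σ_{u ∈ C_{i₁ j}} Σ_{v ∈ C_{i₂ j}} f_{u,v}(C'). -/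
open Finset

attribute [local instance] Classical.propDecidable

/-- A `k`-clustering of `V` is encoded by its cluster-assignment function `Cl : V → Fin k`;
two points are in the same cluster iff they have the same assigned index.
`cluster Cl i` is the `i`-th cluster `C_i`, as a finset. -/
noncomputable def cluster {V : Type*} [Fintype V] {k : ℕ} (Cl : V → Fin k) (i : Fin k) : Finset V :=
  Finset.univ.filter fun v => Cl v = i

/-- `cost_{u,v}(C) = 1[(u,v) ∈ E]·1[u ≢_C v] + 1[(u,v) ∉ E]·1[u ≡_C v]`. -/
noncomputable def costuv {V : Type*} {k : ℕ} (G : SimpleGraph V) (Cl : V → Fin k) (u v : V) : ℝ :=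
  (if G.Adj u v then (if Cl u = Cl v then 0 else 1) else (if Cl u = Cl v then 1 else 0))

/-- `cost(C)`: the number of unordered pairs of distinct points on which the clustering
`Cl` disagrees with the graph `G` (each unordered pair counted once, via half the sum
over ordered pairs). -/
noncomputable def cost {V : Type*} [Fintype V] {k : ℕ} (G : SimpleGraph V) (Cl : V → Fin k) : ℝ :=
  (1 / 2) * ∑ u : V, ∑ v : V, if u ≠ v then costuv G Cl u v else 0

/-- The disagreement distance between two `k`-clusterings:
`d(C,C') = (1/2) Σ_{u ≠ v} (1[u ≡_{C'} v]·1[u ≢_C v] + 1[u ≡_C v]·1[u ≢_{C'} v])`. -/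
noncomputable def dd {V : Type*} [Fintype V] {k : ℕ} (Cl Cl' : V → Fin k) : ℝ :=
  (1 / 2) * ∑ u : V, ∑ v : V, if u ≠ v then
      ((if Cl' u = Cl' v ∧ ¬Cl u = Cl v then (1 : ℝ) else 0) +
        (if Cl u = Cl v ∧ ¬Cl' u = Cl' v then (1 : ℝ) else 0))
    else 0

/-- `f_{u,v}(C') = cost_{u,v}(C') - cost_{u,v}(C)`. -/
noncomputable def fuv {V : Type*} {k : ℕ} (G : SimpleGraph V) (Cl Cl' : V → Fin k) (u v : V) : ℝ :=
  costuv G Cl' u v - costuv G Cl u v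
set_option linter.unusedSectionVars false

section Aux
variable {V : Type*} [Fintype V] {k : ℕ} (G : SimpleGraph V) (C C' : V → Fin k)

lemma costuv_symm (Cl : V → Fin k) (u v : V) : costuv G Cl u v = costuv G Cl v u := by
  unfold costuv
  rw [SimpleGraph.adj_comm]
  exact if_congr Iff.rfl (if_congr eq_comm rfl rfl) (if_congr eq_comm rfl rfl)

lemma fuv_symm (u v : V) : fuv G C C' u v = fuv G C C' v u := by
  unfold fuv
  rw [costuv_symm G C' u v, costuv_symm G C u v]

lemma my_sum_swap_l {ι : Type*} [Fintype ι] (g : ι → V → V → ℝ) :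
    ∑ a : ι, ∑ u : V, ∑ v : V, g a u v = ∑ u : V, ∑ v : V, ∑ a : ι, g a u v := by
  rw [Finset.sum_comm]
  exact Finset.sum_congr rfl fun u _ => Finset.sum_comm

lemma cluster_inter (i j : Fin k) :
    cluster C i ∩ cluster C' j = Finset.univ.filter fun u => C u = i ∧ C' u = j := by
  ext x; simp [cluster]

lemma cluster_sdiff (i j : Fin k) :
    cluster C i \ (cluster C i ∩ cluster C' j)
      = Finset.univ.filter fun v => C v = i ∧ ¬ C' v = j := by
  ext x
  simp only [Finset.mem_sdiff, Finset.mem_inter, Finset.mem_filter, Finset.mem_univ, true_and,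
    cluster]
  tauto

end Aux

/-- For any two `k`-clusterings `C, C'` of `V`, the relative regret
`f(C') = cost(C') − cost(C)` decomposes along the distance-contributing rectangles:
`f(C') = (1/2) Σ_i Σ_j F_{i,j}(C') + Σ_j Σ_{i₁<i₂} F_{i₁,i₂,j}(C')`, where
`F_{i,j}(C') = Σ_{u ∈ C_{ij}} Σ_{v ∈ C_i \ C_{ij}} f_{u,v}(C')` and
`F_{i₁,i₂,j}(C') = Σ_{u ∈ C_{i₁j}} Σ_{v ∈ C_{i₂j}} f_{u,v}(C')`. -/
theorem stmt5 {V : Type*} [Fintype V] {k : ℕ} (G : SimpleGraph V) (C C' : V → Fin k) :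
    cost G C' - cost G C =
      (1 / 2) * ∑ i : Fin k, ∑ j : Fin k,
          ∑ u ∈ cluster C i ∩ cluster C' j,
            ∑ v ∈ cluster C i \ (cluster C i ∩ cluster C' j), fuv G C C' u v
        + ∑ j : Fin k, ∑ i₁ : Fin k, ∑ i₂ : Fin k,
            if i₁ < i₂ then
              ∑ u ∈ cluster C i₁ ∩ cluster C' j,
                ∑ v ∈ cluster C i₂ ∩ cluster C' j, fuv G C C' u v
            else 0 := by
  -- Step 1: LHS = (1/2) * total sum of fuv
  have hL : cost G C' - cost G C = (1/2) * ∑ u : V, ∑ v : V, fuv G C C' u v := by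
    unfold cost
    rw [← mul_sub, ← Finset.sum_sub_distrib]
    congr 1
    refine Finset.sum_congr rfl fun u _ => ?_
    rw [← Finset.sum_sub_distrib]
    refine Finset.sum_congr rfl fun v _ => ?_
    by_cases h : u = v
    · simp [h, fuv, costuv]
    · simp [h, fuv]
  -- Step 2: first RHS sum
  have hS1 : (∑ i : Fin k, ∑ j : Fin k,
        ∑ u ∈ cluster C i ∩ cluster C' j,
          ∑ v ∈ cluster C i \ (cluster C i ∩ cluster C' j), fuv G C C' u v)
      = ∑ u : V, ∑ v : V, if C v = C u ∧ ¬ C' v = C' u then fuv G C C' u v else 0 := by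
    have h1 : ∀ i j : Fin k,
        (∑ u ∈ cluster C i ∩ cluster C' j,
          ∑ v ∈ cluster C i \ (cluster C i ∩ cluster C' j), fuv G C C' u v)
        = ∑ u : V, ∑ v : V,
            if (C u = i ∧ C' u = j) ∧ (C v = i ∧ ¬ C' v = j) then fuv G C C' u v else 0 := by
      intro i j
      rw [cluster_sdiff, cluster_inter, Finset.sum_filter]
      refine Finset.sum_congr rfl fun u _ => ?_
      rw [Finset.sum_filter]
      by_cases hp : C u = i ∧ C' u = j
      · simp [hp]
      · simp [hp]
    simp only [h1]
    rw [show (∑ i : Fin k, ∑ j : Fin k, ∑ u : V, ∑ v : V,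
          if (C u = i ∧ C' u = j) ∧ (C v = i ∧ ¬ C' v = j) then fuv G C C' u v else 0)
        = ∑ u : V, ∑ v : V, ∑ i : Fin k, ∑ j : Fin k,
          if (C u = i ∧ C' u = j) ∧ (C v = i ∧ ¬ C' v = j) then fuv G C C' u v else 0 from by
      rw [show (∑ i : Fin k, ∑ j : Fin k, ∑ u : V, ∑ v : V,
            if (C u = i ∧ C' u = j) ∧ (C v = i ∧ ¬ C' v = j) then fuv G C C' u v else 0)
          = ∑ i : Fin k, ∑ u : V, ∑ v : V, ∑ j : Fin k,
            if (C u = i ∧ C' u = j) ∧ (C v = i ∧ ¬ C' v = j) then fuv G C C' u v else 0 from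
        Finset.sum_congr rfl fun i _ => my_sum_swap_l _]
      exact my_sum_swap_l _]
    refine Finset.sum_congr rfl fun u _ => Finset.sum_congr rfl fun v _ => ?_
    rw [Finset.sum_eq_single (C u)]
    · rw [Finset.sum_eq_single (C' u)]
      · by_cases h : C v = C u ∧ ¬ C' v = C' u
        · rw [if_pos ⟨⟨rfl, rfl⟩, h⟩, if_pos h]
        · rw [if_neg (fun hc => h hc.2), if_neg h]
      · intro j _ hj
        rw [if_neg (fun hc => hj hc.1.2.symm)]
      · simp
    · intro i _ hi
      rw [Finset.sum_eq_zero]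
      intro j _
      rw [if_neg (fun hc => hi hc.1.1.symm)]
    · simp
  -- Step 3: second RHS sum
  have hS2 : (∑ j : Fin k, ∑ i₁ : Fin k, ∑ i₂ : Fin k,
        if i₁ < i₂ then
          ∑ u ∈ cluster C i₁ ∩ cluster C' j,
            ∑ v ∈ cluster C i₂ ∩ cluster C' j, fuv G C C' u v
        else 0)
      = ∑ u : V, ∑ v : V, if C u < C v ∧ C' v = C' u then fuv G C C' u v else 0 := by
    have h1 : ∀ (j i₁ i₂ : Fin k),
        (if i₁ < i₂ then
          ∑ u ∈ cluster C i₁ ∩ cluster C' j,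
            ∑ v ∈ cluster C i₂ ∩ cluster C' j, fuv G C C' u v
        else 0)
        = ∑ u : V, ∑ v : V,
            if i₁ < i₂ ∧ (C u = i₁ ∧ C' u = j) ∧ (C v = i₂ ∧ C' v = j)
            then fuv G C C' u v else 0 := by
      intro j i₁ i₂
      by_cases hlt : i₁ < i₂
      · rw [if_pos hlt, cluster_inter, cluster_inter, Finset.sum_filter]
        refine Finset.sum_congr rfl fun u _ => ?_
        rw [Finset.sum_filter]
        by_cases hp : C u = i₁ ∧ C' u = j
        · simp [hp, hlt]
        · simp [hp]
      · simp [hlt]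
    simp only [h1]
    rw [show (∑ j : Fin k, ∑ i₁ : Fin k, ∑ i₂ : Fin k, ∑ u : V, ∑ v : V,
          if i₁ < i₂ ∧ (C u = i₁ ∧ C' u = j) ∧ (C v = i₂ ∧ C' v = j) then fuv G C C' u v else 0)
        = ∑ u : V, ∑ v : V, ∑ j : Fin k, ∑ i₁ : Fin k, ∑ i₂ : Fin k,
          if i₁ < i₂ ∧ (C u = i₁ ∧ C' u = j) ∧ (C v = i₂ ∧ C' v = j) then fuv G C C' u v else 0 from by
      calc (∑ j : Fin k, ∑ i₁ : Fin k, ∑ i₂ : Fin k, ∑ u : V, ∑ v : V,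
          if i₁ < i₂ ∧ (C u = i₁ ∧ C' u = j) ∧ (C v = i₂ ∧ C' v = j) then fuv G C C' u v else 0)
          = ∑ j : Fin k, ∑ i₁ : Fin k, ∑ u : V, ∑ v : V, ∑ i₂ : Fin k,
            if i₁ < i₂ ∧ (C u = i₁ ∧ C' u = j) ∧ (C v = i₂ ∧ C' v = j) then fuv G C C' u v else 0 :=
          Finset.sum_congr rfl fun j _ => Finset.sum_congr rfl fun i₁ _ => my_sum_swap_l _
        _ = ∑ j : Fin k, ∑ u : V, ∑ v : V, ∑ i₁ : Fin k, ∑ i₂ : Fin k,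
            if i₁ < i₂ ∧ (C u = i₁ ∧ C' u = j) ∧ (C v = i₂ ∧ C' v = j) then fuv G C C' u v else 0 :=
          Finset.sum_congr rfl fun j _ => my_sum_swap_l _
        _ = _ := my_sum_swap_l _]
    refine Finset.sum_congr rfl fun u _ => Finset.sum_congr rfl fun v _ => ?_
    rw [Finset.sum_eq_single (C' u)]
    · rw [Finset.sum_eq_single (C u)]
      · rw [Finset.sum_eq_single (C v)]
        · by_cases h : C u < C v ∧ C' v = C' u
          · rw [if_pos ⟨h.1, ⟨rfl, rfl⟩, ⟨rfl, h.2⟩⟩, if_pos h]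
          · rw [if_neg (fun hc => h ⟨hc.1, hc.2.2.2⟩), if_neg h]
        · intro i₂ _ hi
          rw [if_neg (fun hc => hi hc.2.2.1.symm)]
        · simp
      · intro i₁ _ hi
        rw [Finset.sum_eq_zero]
        intro i₂ _
        rw [if_neg (fun hc => hi hc.2.1.1.symm)]
      · simp
    · intro j _ hj
      rw [Finset.sum_eq_zero]
      intro i₁ _
      rw [Finset.sum_eq_zero]
      intro i₂ _
      rw [if_neg (fun hc => hj hc.2.1.2.symm)]
    · simp
  -- Step 4: symmetry of the "<" sum
  have hsym : (∑ u : V, ∑ v : V, if C u < C v ∧ C' v = C' u then fuv G C C' u v else 0)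
      = ∑ u : V, ∑ v : V, if C v < C u ∧ C' v = C' u then fuv G C C' u v else 0 := by
    rw [Finset.sum_comm]
    refine Finset.sum_congr rfl fun a _ => Finset.sum_congr rfl fun b _ => ?_
    rw [fuv_symm G C C' b a]
    exact if_congr (by constructor <;> (rintro ⟨hh1, hh2⟩; exact ⟨hh1, hh2.symm⟩)) rfl rfl
  -- Step 5: pointwise decomposition of fuv
  have key : ∀ u v : V, fuv G C C' u v
      = (if C v = C u ∧ ¬ C' v = C' u then fuv G C C' u v else 0)
        + (if C u < C v ∧ C' v = C' u then fuv G C C' u v else 0)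
        + (if C v < C u ∧ C' v = C' u then fuv G C C' u v else 0) := by
    intro u v
    by_cases h1 : C u = C v <;> by_cases h2 : C' u = C' v
    · rw [show fuv G C C' u v = 0 from by simp [fuv, costuv, h1, h2]]
      simp
    · rw [if_pos ⟨h1.symm, fun h => h2 h.symm⟩,
          if_neg (fun h => absurd h1 (ne_of_lt h.1)),
          if_neg (fun h => absurd h1.symm (ne_of_lt h.1))]
      ring
    · rcases lt_or_gt_of_ne h1 with hlt | hgt
      · rw [if_neg (fun h => h1 h.1.symm), if_pos ⟨hlt, h2.symm⟩,
            if_neg (fun h => absurd h.1 (asymm hlt))]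
        ring
      · rw [if_neg (fun h => h1 h.1.symm), if_neg (fun h => absurd h.1 (asymm hgt)),
            if_pos ⟨hgt, h2.symm⟩]
        ring
    · rw [show fuv G C C' u v = 0 from by simp [fuv, costuv, h1, h2]]
      simp [fun h : C v = C u => h1 h.symm, fun h : C' v = C' u => h2 h.symm]
  -- Combine
  rw [hL, hS1, hS2]
  have hTot : (∑ u : V, ∑ v : V, fuv G C C' u v)
      = (∑ u : V, ∑ v : V, if C v = C u ∧ ¬ C' v = C' u then fuv G C C' u v else 0)
        + (∑ u : V, ∑ v : V, if C u < C v ∧ C' v = C' u then fuv G C C' u v else 0)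
        + (∑ u : V, ∑ v : V, if C v < C u ∧ C' v = C' u then fuv G C C' u v else 0) := by
    rw [← Finset.sum_add_distrib, ← Finset.sum_add_distrib]
    refine Finset.sum_congr rfl fun u _ => ?_
    rw [← Finset.sum_add_distrib, ← Finset.sum_add_distrib]
    exact Finset.sum_congr rfl fun v _ => key u v
  rw [hTot, ← hsym]
  ring
end

section
/- Let k ≥ 2 be an integer and let b₁, b₂, c₁, c₂ be real numbers with 0 < c₂ ≤ c₁, 0 ≤ b₂ ≤ c₂, 0 ≤ b₁ ≤ c₂/k, and b₁(c₁ − b₁) ≤ b₂(c₂ − b₂). Then b₁ ≤ 2b₂. -/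
/-- Let `k ≥ 2` be an integer and `b₁, b₂, c₁, c₂` real numbers with
`0 < c₂ ≤ c₁`, `0 ≤ b₂ ≤ c₂`, `0 ≤ b₁ ≤ c₂/k`, and `b₁(c₁ − b₁) ≤ b₂(c₂ − b₂)`.
Then `b₁ ≤ 2 b₂`. -/
theorem stmt18 (k : ℕ) (hk : 2 ≤ k) (b₁ b₂ c₁ c₂ : ℝ)
    (hc₂ : 0 < c₂) (hcc : c₂ ≤ c₁) (hb₂0 : 0 ≤ b₂) (hb₂ : b₂ ≤ c₂)
    (hb₁0 : 0 ≤ b₁) (hb₁ : b₁ ≤ c₂ / (k : ℝ))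
    (h : b₁ * (c₁ - b₁) ≤ b₂ * (c₂ - b₂)) :
    b₁ ≤ 2 * b₂ := by
  have hk2 : (2 : ℝ) ≤ (k : ℝ) := by exact_mod_cast hk
  have hb₁' : b₁ ≤ c₂ / 2 := le_trans hb₁ (by
    apply div_le_div_of_nonneg_left hc₂.le (by norm_num) hk2)
  nlinarith [mul_nonneg hb₁0 hb₂0, mul_nonneg hb₂0 (sub_nonneg.2 hb₂)]
end
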